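/- Let X be a nonempty complete p-uniformly convex metric space with parameter k > 0 and let S be a nonempty bounded subset of X. Then there exists a unique point z ∈ X (the circumcenter of S) such that sup_{y ∈ S} d(z,y) = rad(S); in particular S is contained in the unique closed circumball B(z, rad(S)). -/

import Mathlib

/-- Existence and uniqueness of the circumcenter in a complete `p`-uniformly convex
space: there is a unique `z : X` with `⨆ y ∈ S, dist z y = rad S`; in particular
`S` is contained in the closed ball `B(z, rad S)`. -/
theorem circumcenter_exists_unique
    {X : Type*} [MetricSpace X] [Nonempty X] [CompleteSpace X]
    (p k : ℝ) (hp : 1 ≤ p) (hk : 0 < k)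
    (geo : ∀ x y : X, ∃ m : X, dist x m = dist x y / 2 ∧ dist m y = dist x y / 2)
    (puc : ∀ x y z m : X,
      dist x m = dist x y / 2 → dist m y = dist x y / 2 →
      dist z m ^ p ≤ (1 / 2) * dist z x ^ p + (1 / 2) * dist z y ^ p
        - (k / 8) * dist x y ^ p)
    (S : Set X) (hS : S.Nonempty) (hSb : Bornology.IsBounded S) :
    ∃! z : X, (⨆ y : S, dist z (y : X)) = (⨅ x : X, ⨆ y : S, dist x (y : X)) ∧
      S ⊆ Metric.closedBall z (⨅ x : X, ⨆ y : S, dist x (y : X)) := by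
  classical
  have hp0 : (0:ℝ) < p := lt_of_lt_of_le one_pos hp
  obtain ⟨s0, hs0⟩ := hS
  haveI : Nonempty S := ⟨⟨s0, hs0⟩⟩
  set r : X → ℝ := fun x => ⨆ y : S, dist x (y : X) with hr
  have hbdd : ∀ x : X, BddAbove (Set.range fun y : S => dist x (y : X)) := by
    intro x
    obtain ⟨R, hR⟩ := (Metric.isBounded_iff_subset_closedBall x).mp hSb
    refine ⟨R, ?_⟩
    rintro _ ⟨y, rfl⟩
    simpa [dist_comm] using hR y.2
  have hr_ge : ∀ (x : X) (y : S), dist x (y:X) ≤ r x := fun x y => le_ciSup (hbdd x) y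
  have hr_nonneg : ∀ x, 0 ≤ r x := fun x =>
    le_trans dist_nonneg (hr_ge x ⟨s0, hs0⟩)
  have hbelow : BddBelow (Set.range r) := ⟨0, by rintro _ ⟨x, rfl⟩; exact hr_nonneg x⟩
  set rad : ℝ := ⨅ x : X, r x with hradDef
  have hrad_le : ∀ x, rad ≤ r x := fun x => ciInf_le hbelow x
  have hrad_nonneg : 0 ≤ rad := le_ciInf fun x => hr_nonneg x
  have hlip : ∀ x x' : X, r x ≤ dist x x' + r x' := by
    intro x x'
    refine ciSup_le fun y => ?_
    calc dist x (y:X) ≤ dist x x' + dist x' y := dist_triangle _ _ _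
      _ ≤ dist x x' + r x' := by linarith [hr_ge x' y]
  -- key convexity inequality
  have key : ∀ x y : X,
      (k/8) * dist x y ^ p ≤ (1/2) * r x ^ p + (1/2) * r y ^ p - rad ^ p := by
    intro x y
    obtain ⟨m, hm1, hm2⟩ := geo x y
    set A : ℝ := (1/2) * r x ^ p + (1/2) * r y ^ p - (k/8) * dist x y ^ p with hA
    have hptA : ∀ z : S, dist m (z:X) ^ p ≤ A := by
      intro z
      have h1 := puc x y z m hm1 hm2
      have h2 : dist (z:X) x ^ p ≤ r x ^ p :=
        Real.rpow_le_rpow dist_nonneg (by rw [dist_comm]; exact hr_ge x z) hp0.le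
      have h3 : dist (z:X) y ^ p ≤ r y ^ p :=
        Real.rpow_le_rpow dist_nonneg (by rw [dist_comm]; exact hr_ge y z) hp0.le
      rw [dist_comm, hA]
      linarith
    have hAnn : 0 ≤ A :=
      le_trans (Real.rpow_nonneg dist_nonneg p) (hptA ⟨s0, hs0⟩)
    have hle : ∀ z : S, dist m (z:X) ≤ A ^ p⁻¹ := by
      intro z
      have : (dist m (z:X) ^ p) ^ p⁻¹ ≤ A ^ p⁻¹ :=
        Real.rpow_le_rpow (Real.rpow_nonneg dist_nonneg p) (hptA z) (by positivity)
      rwa [Real.rpow_rpow_inv dist_nonneg hp0.ne'] at this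
    have hrm : r m ≤ A ^ p⁻¹ := ciSup_le hle
    have hradm : rad ≤ A ^ p⁻¹ := le_trans (hrad_le m) hrm
    have : rad ^ p ≤ (A ^ p⁻¹) ^ p :=
      Real.rpow_le_rpow hrad_nonneg hradm hp0.le
    rw [Real.rpow_inv_rpow hAnn hp0.ne', hA] at this
    linarith
  -- a minimizing sequence
  have hseq : ∀ n : ℕ, ∃ x : X, r x ^ p < rad ^ p + 1/(n+1) := by
    intro n
    have hδ : (0:ℝ) < 1/(n+1) := by positivity
    have hB : rad < (rad ^ p + 1/(n+1)) ^ p⁻¹ := by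
      have h1 : (rad ^ p) ^ p⁻¹ < (rad ^ p + 1/(n+1)) ^ p⁻¹ :=
        Real.rpow_lt_rpow (Real.rpow_nonneg hrad_nonneg p) (by linarith) (by positivity)
      rwa [Real.rpow_rpow_inv hrad_nonneg hp0.ne'] at h1
    obtain ⟨x, hx⟩ := exists_lt_of_ciInf_lt hB
    refine ⟨x, ?_⟩
    have h2 : r x ^ p < ((rad ^ p + 1/(n+1)) ^ p⁻¹) ^ p :=
      Real.rpow_lt_rpow (hr_nonneg x) hx hp0
    rwa [Real.rpow_inv_rpow (by positivity) hp0.ne'] at h2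
  choose u hu using hseq
  have hru : ∀ n, rad ≤ r (u n) := fun n => hrad_le (u n)
  have hrupow : ∀ n, rad ^ p ≤ r (u n) ^ p := fun n =>
    Real.rpow_le_rpow hrad_nonneg (hru n) hp0.le
  -- Cauchy
  have hCauchy : CauchySeq u := by
    rw [Metric.cauchySeq_iff]
    intro ε hε
    have hεp : 0 < ε ^ p := Real.rpow_pos_of_pos hε p
    obtain ⟨N, hN⟩ := exists_nat_gt ((8/k) / ε ^ p)
    refine ⟨N, fun m hm n hn => ?_⟩
    have hmono : ∀ j, N ≤ j → r (u j) ^ p < rad ^ p + 1/(N+1) := by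
      intro j hj
      refine lt_of_lt_of_le (hu j) ?_
      have : (1:ℝ)/(j+1) ≤ 1/(N+1) := by
        apply one_div_le_one_div_of_le (by positivity)
        exact_mod_cast Nat.succ_le_succ hj
      linarith
    have h1 := hmono m hm
    have h2 := hmono n hn
    have hkey := key (u m) (u n)
    have hd : (k/8) * dist (u m) (u n) ^ p < 1/(N+1) := by nlinarith
    have hN1 : (0:ℝ) < (N:ℝ) + 1 := by positivity
    have hfrac : (8/k) / ((N:ℝ)+1) < ε ^ p := by
      rw [div_lt_iff₀ hN1]
      have h' := (div_lt_iff₀ hεp).mp hN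
      nlinarith
    have h8 : (8/k) * (k/8 * dist (u m) (u n) ^ p) = dist (u m) (u n) ^ p := by
      field_simp
    have hmul := mul_lt_mul_of_pos_left hd (show (0:ℝ) < 8/k by positivity)
    rw [h8] at hmul
    have hdp : dist (u m) (u n) ^ p < ε ^ p := by
      have he : (8:ℝ)/k * (1/((N:ℝ)+1)) = (8/k) / ((N:ℝ)+1) := by ring
      rw [he] at hmul
      linarith
    by_contra hcon
    push_neg at hcon
    exact absurd (Real.rpow_le_rpow hε.le hcon hp0.le) (not_le.mpr hdp)
  obtain ⟨z, hz⟩ := cauchySeq_tendsto_of_complete hCauchy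
  -- r (u n) → rad
  have hupper : ∀ n, r (u n) ≤ (rad ^ p + 1/(n+1)) ^ p⁻¹ := by
    intro n
    have : (r (u n) ^ p) ^ p⁻¹ ≤ (rad ^ p + 1/(n+1)) ^ p⁻¹ :=
      Real.rpow_le_rpow (Real.rpow_nonneg (hr_nonneg _) p) (hu n).le (by positivity)
    rwa [Real.rpow_rpow_inv (hr_nonneg _) hp0.ne'] at this
  have htend_aux : Filter.Tendsto (fun n : ℕ => (rad ^ p + 1/(n+1)) ^ p⁻¹)
      Filter.atTop (nhds rad) := by
    have h1 : Filter.Tendsto (fun n : ℕ => rad ^ p + 1/(n+1)) Filter.atTop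
        (nhds (rad ^ p)) := by
      have : Filter.Tendsto (fun n : ℕ => 1 / ((n : ℝ) + 1)) Filter.atTop (nhds 0) :=
        tendsto_one_div_add_atTop_nhds_zero_nat
      simpa using (tendsto_const_nhds (x := rad ^ p)).add this
    have h2 : ContinuousAt (fun t : ℝ => t ^ p⁻¹) (rad ^ p) :=
      Real.continuousAt_rpow_const _ _ (Or.inr (by positivity))
    have := h2.tendsto.comp h1
    simpa [Function.comp_def, Real.rpow_rpow_inv hrad_nonneg hp0.ne'] using this
  have htend : Filter.Tendsto (fun n => r (u n)) Filter.atTop (nhds rad) :=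
    tendsto_of_tendsto_of_tendsto_of_le_of_le tendsto_const_nhds htend_aux hru hupper
  have hlipw : LipschitzWith 1 r := by
    apply LipschitzWith.of_dist_le_mul
    intro x y
    rw [Real.dist_eq, NNReal.coe_one, one_mul, abs_sub_le_iff]
    constructor
    · have := hlip x y; linarith
    · have := hlip y x; rw [dist_comm]; linarith
  have htend2 : Filter.Tendsto (fun n => r (u n)) Filter.atTop (nhds (r z)) :=
    (hlipw.continuous.tendsto z).comp hz
  have hrz : r z = rad := tendsto_nhds_unique htend2 htend
  -- uniqueness
  have huniq : ∀ w, r w = rad → w = z := by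
    intro w hw
    by_contra hne
    have hd : 0 < dist w z := dist_pos.2 hne
    have hdp : 0 < dist w z ^ p := Real.rpow_pos_of_pos hd p
    have := key w z
    rw [hw, hrz] at this
    nlinarith
  refine ⟨z, ⟨?_, ?_⟩, ?_⟩
  · exact hrz
  · intro y hy
    have : dist z y ≤ r z := hr_ge z ⟨y, hy⟩
    rw [hrz] at this
    simpa [Metric.mem_closedBall, dist_comm] using this
  · rintro w ⟨hw, -⟩
    exact huniq w hw
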